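/- Let {M_i}_{i=1}^m be an observable on a finite-dimensional complex Hilbert space H and H₀ a subspace of H. Then H₀ is indistinguishable for {M_i} if and only if ⟨ψ, M_i φ⟩ = 0 for every i and every pair of mutually orthogonal vectors φ, ψ ∈ H₀. -/

import Mathlib

/-- A state on H whose range lies in a subspace H₀: a positive operator of trace one. -/
def IsStateSupportedIn {H : Type*} [NormedAddCommGroup H] [InnerProductSpace ℂ H]
    [CompleteSpace H] (H₀ : Submodule ℂ H) (ρ : H →L[ℂ] H) : Prop :=
  ρ.IsPositive ∧ LinearMap.trace ℂ H ↑ρ = 1 ∧ LinearMap.range (ρ : H →ₗ[ℂ] H) ≤ H₀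

/-- H₀ is indistinguishable for the observable {M_i}: all states supported in H₀
give the same outcome probabilities Tr(M_i ρ). -/
def Indistinguishable {H : Type*} [NormedAddCommGroup H] [InnerProductSpace ℂ H]
    [CompleteSpace H] {m : ℕ} (M : Fin m → H →L[ℂ] H) (H₀ : Submodule ℂ H) : Prop :=
  ∀ i, ∀ ρ₁ ρ₂ : H →L[ℂ] H,
    IsStateSupportedIn H₀ ρ₁ → IsStateSupportedIn H₀ ρ₂ →
    LinearMap.trace ℂ H ((M i : H →ₗ[ℂ] H) ∘ₗ (ρ₁ : H →ₗ[ℂ] H)) =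
      LinearMap.trace ℂ H ((M i : H →ₗ[ℂ] H) ∘ₗ (ρ₂ : H →ₗ[ℂ] H))

section Aux

open scoped InnerProductSpace ComplexConjugate
local notation "⟪" x ", " y "⟫" => @inner ℂ _ _ x y

variable {H : Type*} [NormedAddCommGroup H] [InnerProductSpace ℂ H] [FiniteDimensional ℂ H]

lemma aux_trace_eq_sum_inner {ι : Type*} [Fintype ι] [DecidableEq ι]
    (b : OrthonormalBasis ι ℂ H) (T : H →ₗ[ℂ] H) :
    LinearMap.trace ℂ H T = ∑ i, ⟪b i, T (b i)⟫ := by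
  rw [LinearMap.trace_eq_matrix_trace ℂ b.toBasis, Matrix.trace]
  congr 1
  ext i
  rw [Matrix.diag_apply, LinearMap.toMatrix_apply, OrthonormalBasis.coe_toBasis_repr_apply,
    OrthonormalBasis.repr_apply_apply, OrthonormalBasis.coe_toBasis]

lemma aux_trace_rankOne (χ v : H) :
    LinearMap.trace ℂ H ((innerSL ℂ χ).smulRight v : H →ₗ[ℂ] H) = ⟪χ, v⟫ := by
  rw [aux_trace_eq_sum_inner (stdOrthonormalBasis ℂ H)]
  simp only [ContinuousLinearMap.coe_coe, ContinuousLinearMap.smulRight_apply, innerSL_apply_apply,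
    inner_smul_right]
  exact (stdOrthonormalBasis ℂ H).sum_inner_mul_inner χ v

lemma aux_exists_scalar {V : Type*} [AddCommGroup V] [Module ℂ V] (T : V →ₗ[ℂ] V)
    (h : ∀ v : V, ∃ c : ℂ, T v = c • v) : ∃ c : ℂ, ∀ v : V, T v = c • v := by
  by_cases hV : ∀ v : V, v = 0
  · exact ⟨0, fun v => by rw [hV v]; simp⟩
  push_neg at hV
  obtain ⟨v₀, hv₀⟩ := hV
  obtain ⟨c₀, hc₀⟩ := h v₀
  refine ⟨c₀, fun v => ?_⟩
  obtain ⟨c, hc⟩ := h v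
  by_cases hdep : ∃ a : ℂ, v = a • v₀
  · obtain ⟨a, rfl⟩ := hdep
    rw [map_smul, hc₀, smul_comm]
  · obtain ⟨d, hd⟩ := h (v + v₀)
    rw [map_add, hc, hc₀, smul_add] at hd
    have key : (d - c) • v = (c₀ - d) • v₀ := by
      rw [sub_smul, sub_smul]
      linear_combination (norm := module) -hd
    have hdc : d = c := by
      by_contra hne
      exact hdep ⟨(d - c)⁻¹ * (c₀ - d), by
        rw [mul_smul, ← key, smul_smul, inv_mul_cancel₀ (sub_ne_zero.2 hne), one_smul]⟩
    rw [hdc, sub_self, zero_smul] at key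
    rcases smul_eq_zero.1 key.symm with h' | h'
    · rw [hc, sub_eq_zero.1 h']
    · exact absurd h' hv₀

lemma aux_rankOne_state (H₀ : Submodule ℂ H) (χ : H) (hχ : χ ∈ H₀) (h1 : ⟪χ, χ⟫ = 1) :
    IsStateSupportedIn H₀ ((innerSL ℂ χ).smulRight χ) := by
  refine ⟨⟨?_, ?_⟩, ?_, ?_⟩
  · intro x y
    simp only [ContinuousLinearMap.coe_coe, ContinuousLinearMap.smulRight_apply, innerSL_apply_apply,
      inner_smul_left, inner_smul_right, ← inner_conj_symm x χ]
    ring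
  · intro x
    rw [ContinuousLinearMap.reApplyInnerSelf_apply]
    simp only [ContinuousLinearMap.smulRight_apply, innerSL_apply_apply, inner_smul_left,
      RCLike.conj_mul]
    rw [← RCLike.ofReal_pow]; rw [RCLike.ofReal_re]; positivity
  · rw [aux_trace_rankOne, h1]
  · rintro x ⟨y, rfl⟩
    exact Submodule.smul_mem _ _ hχ

lemma aux_comp_rankOne (A : H →L[ℂ] H) (χ : H) :
    (A : H →ₗ[ℂ] H) ∘ₗ ((innerSL ℂ χ).smulRight χ : H →ₗ[ℂ] H)
      = ((innerSL ℂ χ).smulRight (A χ) : H →ₗ[ℂ] H) := by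
  ext x
  simp

lemma aux_forward (H₀ : Submodule ℂ H) (A : H →L[ℂ] H)
    (key : ∀ χ₁ χ₂ : H, χ₁ ∈ H₀ → χ₂ ∈ H₀ → ⟪χ₁, χ₁⟫ = 1 → ⟪χ₂, χ₂⟫ = 1 →
      ⟪χ₁, A χ₁⟫ = ⟪χ₂, A χ₂⟫)
    (φ : H) (hφ : φ ∈ H₀) (ψ : H) (hψ : ψ ∈ H₀) (horth : ⟪ψ, φ⟫ = 0) :
    ⟪ψ, A φ⟫ = 0 := by
  by_cases hφ0 : φ = 0
  · simp [hφ0]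
  by_cases hψ0 : ψ = 0
  · simp [hψ0]
  have hφn : (‖φ‖ : ℂ) ≠ 0 := by exact_mod_cast norm_ne_zero_iff.2 hφ0
  have hψn : (‖ψ‖ : ℂ) ≠ 0 := by exact_mod_cast norm_ne_zero_iff.2 hψ0
  set a : ℂ := (‖φ‖ : ℂ)⁻¹ with ha
  set b : ℂ := (‖ψ‖ : ℂ)⁻¹ with hb
  have ha0 : a ≠ 0 := inv_ne_zero hφn
  have hb0 : b ≠ 0 := inv_ne_zero hψn
  have hconja : conj a = a := by rw [ha, map_inv₀, Complex.conj_ofReal]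
  have hconjb : conj b = b := by rw [hb, map_inv₀, Complex.conj_ofReal]
  obtain ⟨φ', hφ'⟩ : ∃ x : H, x = a • φ := ⟨_, rfl⟩
  obtain ⟨ψ', hψ'⟩ : ∃ x : H, x = b • ψ := ⟨_, rfl⟩
  have hφ'm : φ' ∈ H₀ := hφ' ▸ Submodule.smul_mem _ _ hφ
  have hψ'm : ψ' ∈ H₀ := hψ' ▸ Submodule.smul_mem _ _ hψ
  have hφ'1 : ⟪φ', φ'⟫ = 1 := by
    rw [hφ', inner_smul_left, inner_smul_right, hconja, inner_self_eq_norm_sq_to_K, ha]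
    field_simp
    norm_cast
  have hψ'1 : ⟪ψ', ψ'⟫ = 1 := by
    rw [hψ', inner_smul_left, inner_smul_right, hconjb, inner_self_eq_norm_sq_to_K, hb]
    field_simp
    norm_cast
  have horth' : ⟪ψ', φ'⟫ = 0 := by
    rw [hψ', hφ', inner_smul_left, inner_smul_right, horth]; ring
  have horth'' : ⟪φ', ψ'⟫ = 0 := by
    rw [← inner_conj_symm, horth', map_zero]
  set s : ℝ := (Real.sqrt 2)⁻¹ with hsdef
  have hs2 : (s : ℂ) * (s : ℂ) * 2 = 1 := by
    have h2 : Real.sqrt 2 * Real.sqrt 2 = 2 := Real.mul_self_sqrt (by norm_num)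
    have h3 : (s : ℝ) * s * 2 = 1 := by
      rw [hsdef]
      field_simp
      rw [sq]; exact h2.symm
    exact_mod_cast h3
  have hconjs : conj (s : ℂ) = s := Complex.conj_ofReal s
  have hc2 : ⟪ψ', A ψ'⟫ = ⟪φ', A φ'⟫ := key ψ' φ' hψ'm hφ'm hψ'1 hφ'1
  obtain ⟨u, hu⟩ : ∃ x : H, x = (s : ℂ) • (φ' + ψ') := ⟨_, rfl⟩
  have hum : u ∈ H₀ := hu ▸ Submodule.smul_mem _ _ (Submodule.add_mem _ hφ'm hψ'm)
  have hu1 : ⟪u, u⟫ = 1 := by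
    simp only [hu, inner_smul_left, inner_smul_right, inner_add_left, inner_add_right,
      hconjs, hφ'1, hψ'1, horth', horth'']
    linear_combination hs2
  have E1 := key u φ' hum hφ'm hu1 hφ'1
  simp only [hu, map_smul, map_add, inner_smul_left, inner_smul_right, inner_add_left,
    inner_add_right, hconjs, hc2] at E1
  have hXY : ⟪φ', A ψ'⟫ + ⟪ψ', A φ'⟫ = 0 := by
    linear_combination 2 * E1 - (2 * ⟪φ', A φ'⟫ + ⟪φ', A ψ'⟫ + ⟪ψ', A φ'⟫) * hs2
  obtain ⟨w, hw⟩ : ∃ x : H, x = (s : ℂ) • φ' + ((s : ℂ) * Complex.I) • ψ' := ⟨_, rfl⟩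
  have hwm : w ∈ H₀ := hw ▸ Submodule.add_mem _ (Submodule.smul_mem _ _ hφ'm)
    (Submodule.smul_mem _ _ hψ'm)
  have hw1 : ⟪w, w⟫ = 1 := by
    simp only [hw, inner_smul_left, inner_smul_right, inner_add_left, inner_add_right,
      map_mul, hconjs, Complex.conj_I, hφ'1, hψ'1, horth', horth'']
    linear_combination hs2 - (s:ℂ) * (s:ℂ) * Complex.I_mul_I
  have E2 := key w φ' hwm hφ'm hw1 hφ'1
  simp only [hw, map_smul, map_add, inner_smul_left, inner_smul_right, inner_add_left,
    inner_add_right, map_mul, hconjs, Complex.conj_I, hc2] at E2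
  have hXY2 : Complex.I * (⟪φ', A ψ'⟫ - ⟪ψ', A φ'⟫) = 0 := by
    linear_combination 2 * E2
      - (⟪φ', A φ'⟫ + Complex.I * ⟪φ', A ψ'⟫ - Complex.I * ⟪ψ', A φ'⟫
          - Complex.I * Complex.I * ⟪φ', A φ'⟫) * hs2
      + ⟪φ', A φ'⟫ * Complex.I_mul_I
  have hXeqY : ⟪φ', A ψ'⟫ = ⟪ψ', A φ'⟫ := by
    rcases mul_eq_zero.1 hXY2 with h | h
    · exact absurd h Complex.I_ne_zero
    · exact sub_eq_zero.1 h
  have hY0 : ⟪ψ', A φ'⟫ = 0 := by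
    rw [← hXeqY] at hXY ⊢
    linear_combination hXY / 2
  rw [hψ', hφ', map_smul, inner_smul_left, inner_smul_right, hconjb] at hY0
  rcases mul_eq_zero.1 hY0 with h | h
  · exact absurd h hb0
  rcases mul_eq_zero.1 h with h' | h'
  · exact absurd h' ha0
  · exact h'

lemma aux_eigen_step (H₀ : Submodule ℂ H) (A : H →L[ℂ] H)
    (hA : ∀ φ ∈ H₀, ∀ ψ ∈ H₀, ⟪ψ, φ⟫ = 0 → ⟪ψ, A φ⟫ = 0) (v : H₀) :
    ∃ c : ℂ, (H₀.orthogonalProjectionOnto) (A v) = c • v := by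
  by_cases hv : v = 0
  · exact ⟨0, by simp [hv]⟩
  have hv' : (v : H) ≠ 0 := fun h => hv (Subtype.ext h)
  have hvv : ⟪(v : H), (v : H)⟫ ≠ 0 := inner_self_ne_zero.2 hv'
  have hvvr : conj ⟪(v : H), (v : H)⟫ = ⟪(v : H), (v : H)⟫ := inner_conj_symm _ _
  set c : ℂ := ⟪(v : H), A v⟫ / ⟪(v : H), (v : H)⟫ with hcdef
  refine ⟨c, ?_⟩
  have key : (↑(H₀.orthogonalProjectionOnto (A v)) : H) = c • (v : H) := by
    refine Submodule.eq_starProjection_of_mem_of_inner_eq_zero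
      (Submodule.smul_mem _ _ v.2) (fun w hw => ?_)
    have hz : ⟪w, A v - c • (v : H)⟫ = 0 := by
      set d : ℂ := ⟪(v : H), w⟫ / ⟪(v : H), (v : H)⟫ with hddef
      have hw'm : w - d • (v : H) ∈ H₀ := Submodule.sub_mem _ hw (Submodule.smul_mem _ _ v.2)
      have horth : ⟪w - d • (v : H), (v : H)⟫ = 0 := by
        rw [inner_sub_left, inner_smul_left, hddef, map_div₀, inner_conj_symm, hvvr]
        field_simp
        ring
      have h0 : ⟪w - d • (v : H), A v⟫ = 0 := hA v v.2 _ hw'm horth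
      rw [inner_sub_left, inner_smul_left, hddef, map_div₀, inner_conj_symm, hvvr] at h0
      rw [inner_sub_right, inner_smul_right, hcdef]
      field_simp at h0 ⊢
      linear_combination h0
    rw [← inner_conj_symm, hz, map_zero]
  exact Subtype.ext (by rw [key]; rfl)

lemma aux_backward (H₀ : Submodule ℂ H) (A : H →L[ℂ] H)
    (hA : ∀ φ ∈ H₀, ∀ ψ ∈ H₀, ⟪ψ, φ⟫ = 0 → ⟪ψ, A φ⟫ = 0) :
    ∃ c : ℂ, ∀ ρ : H →L[ℂ] H, IsStateSupportedIn H₀ ρ →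
      LinearMap.trace ℂ H ((A : H →ₗ[ℂ] H) ∘ₗ (ρ : H →ₗ[ℂ] H)) = c := by
  set π : H →L[ℂ] H₀ := H₀.orthogonalProjectionOnto with hπ
  set ι : H₀ →L[ℂ] H := H₀.subtypeL with hι
  obtain ⟨c, hc⟩ := aux_exists_scalar ((π.comp (A.comp ι) : H₀ →L[ℂ] H₀) : H₀ →ₗ[ℂ] H₀)
    (fun v => by simpa [hπ, hι] using aux_eigen_step H₀ A hA v)
  refine ⟨c, fun ρ hρ => ?_⟩
  obtain ⟨hpos, htr, hrange⟩ := hρ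
  have hsym : (ρ : H →ₗ[ℂ] H).IsSymmetric :=
    hpos.1
  have hker : ∀ y : H, y ∈ H₀ᗮ → ρ y = 0 := by
    intro y hy
    have h1 : ⟪ρ (ρ y), y⟫ = ⟪ρ y, ρ y⟫ := hsym (ρ y) y
    have h2 : ⟪ρ (ρ y), y⟫ = 0 :=
      (Submodule.mem_orthogonal H₀ y).1 hy _ (hrange ⟨ρ y, rfl⟩)
    exact inner_self_eq_zero.1 (h1 ▸ h2)
  set ρ₀ : H₀ →L[ℂ] H₀ := π.comp (ρ.comp ι) with hρ₀
  have hfact : ∀ x : H, (↑(ρ₀ (π x)) : H) = ρ x := by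
    intro x
    have h1 : ρ ((π x : H₀) : H) = ρ x := by
      have h2 := hker _ (H₀.sub_starProjection_mem_orthogonal x)
      rw [map_sub, sub_eq_zero] at h2
      exact h2.symm
    have h3 : ρ ((π x : H₀) : H) ∈ H₀ := hrange ⟨_, rfl⟩
    calc (↑(ρ₀ (π x)) : H) = ↑((H₀.orthogonalProjectionOnto) (ρ ((π x : H₀) : H))) := rfl
      _ = ρ ((π x : H₀) : H) := Submodule.starProjection_eq_self_iff.2 h3
      _ = ρ x := h1
  have hcomp1 : (A : H →ₗ[ℂ] H) ∘ₗ (ρ : H →ₗ[ℂ] H)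
      = ((A.comp ι : H₀ →L[ℂ] H) : H₀ →ₗ[ℂ] H)
        ∘ₗ ((ρ₀.comp π : H →L[ℂ] H₀) : H →ₗ[ℂ] H₀) := by
    ext x
    exact congrArg A (hfact x).symm
  have hcomp2 : ((ρ₀.comp π : H →L[ℂ] H₀) : H →ₗ[ℂ] H₀)
      ∘ₗ ((A.comp ι : H₀ →L[ℂ] H) : H₀ →ₗ[ℂ] H)
      = c • (ρ₀ : H₀ →ₗ[ℂ] H₀) := by
    ext v
    have : (π.comp (A.comp ι)) v = c • v := hc v
    simp only [LinearMap.comp_apply, ContinuousLinearMap.coe_coe,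
      ContinuousLinearMap.comp_apply, LinearMap.smul_apply] at this ⊢
    rw [this, map_smul]
  have hcomp3 : ((ρ₀.comp π : H →L[ℂ] H₀) : H →ₗ[ℂ] H₀) ∘ₗ (ι : H₀ →ₗ[ℂ] H)
      = (ρ₀ : H₀ →ₗ[ℂ] H₀) := by
    ext v
    simp only [LinearMap.comp_apply, ContinuousLinearMap.coe_coe,
      ContinuousLinearMap.comp_apply]
    exact congrArg (fun z : H₀ => ((ρ₀ z : H₀) : H)) (Submodule.orthogonalProjectionOnto_mem_subspace_eq_self v)
  have htr0 : LinearMap.trace ℂ H₀ (ρ₀ : H₀ →ₗ[ℂ] H₀) = 1 := by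
    rw [← hcomp3, LinearMap.trace_comp_comm', ← htr]
    congr 1
    ext x
    exact hfact x
  rw [hcomp1, LinearMap.trace_comp_comm', hcomp2, map_smul, htr0, smul_eq_mul, mul_one]

end Aux

/-- A subspace H₀ is indistinguishable for an observable {M_i} iff ⟨ψ, M_i φ⟩ = 0 for
every i and every pair of mutually orthogonal vectors φ, ψ ∈ H₀. -/
theorem indistinguishable_iff_orthogonal_pairs
    {H : Type*} [NormedAddCommGroup H] [InnerProductSpace ℂ H] [FiniteDimensional ℂ H]
    {m : ℕ} (M : Fin m → H →L[ℂ] H)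
    (hpos : ∀ i, (M i).IsPositive) (hsum : ∑ i, M i = 1)
    (H₀ : Submodule ℂ H) :
    Indistinguishable M H₀ ↔
      ∀ i, ∀ φ ∈ H₀, ∀ ψ ∈ H₀, (inner ℂ ψ φ : ℂ) = 0 → (inner ℂ ψ (M i φ) : ℂ) = 0 := by
  constructor
  · intro hInd i φ hφ ψ hψ horth
    refine aux_forward H₀ (M i) (fun χ₁ χ₂ m1 m2 u1 u2 => ?_) φ hφ ψ hψ horth
    have h := hInd i _ _ (aux_rankOne_state H₀ χ₁ m1 u1) (aux_rankOne_state H₀ χ₂ m2 u2)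
    rwa [aux_comp_rankOne, aux_comp_rankOne, aux_trace_rankOne, aux_trace_rankOne] at h
  · intro h i ρ₁ ρ₂ h1 h2
    obtain ⟨c, hc⟩ := aux_backward H₀ (M i) (h i)
    rw [hc ρ₁ h1, hc ρ₂ h2]
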